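/- Let c₁, c₂ > 0, α₁ ∈ (0,1), α₂ > 1. Then for every v ≥ 0, c₁ v^{α₁} + c₂ v^{α₂} ≥ min(c₁, c₂) · max(v^{α₁}, v^{α₂}), and consequently the solution of the comparison ODE v' = -c₁ v^{α₁} - c₂ v^{α₂}, v(0) = v₀ > 0, reaches zero at a time T(v₀) satisfying T(v₀) ≤ 1/(c₁(1-α₁)) + 1/(c₂(α₂-1)) for every v₀ > 0. -/

import Mathlib

open Set

private lemma mono_aux {f : ℝ → ℝ} {a b : ℝ} (hab : a ≤ b)
    (h : ∀ t ∈ Set.Icc a b, ∃ d, 0 ≤ d ∧ HasDerivAt f d t) : f a ≤ f b := by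
  have hc : ContinuousOn f (Set.Icc a b) := fun t ht => by
    obtain ⟨d, _, hd⟩ := h t ht
    exact hd.continuousAt.continuousWithinAt
  have hmono := monotoneOn_of_deriv_nonneg (convex_Icc a b) hc
    (fun t ht => by
      rw [interior_Icc] at ht
      obtain ⟨d, _, hd⟩ := h t (Set.Ioo_subset_Icc_self ht)
      exact hd.differentiableAt.differentiableWithinAt)
    (fun t ht => by
      rw [interior_Icc] at ht
      obtain ⟨d, hd0, hd⟩ := h t (Set.Ioo_subset_Icc_self ht)
      rw [hd.deriv]; exact hd0)
  exact hmono (Set.left_mem_Icc.2 hab) (Set.right_mem_Icc.2 hab) hab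

theorem fixed_time_comparison (c₁ c₂ α₁ α₂ : ℝ) (hc₁ : 0 < c₁) (hc₂ : 0 < c₂)
    (hα₁0 : 0 < α₁) (hα₁1 : α₁ < 1) (hα₂ : 1 < α₂) :
    (∀ v : ℝ, 0 ≤ v → min c₁ c₂ * max (v ^ α₁) (v ^ α₂) ≤ c₁ * v ^ α₁ + c₂ * v ^ α₂) ∧
    (∀ v₀ : ℝ, 0 < v₀ → ∀ v : ℝ → ℝ, v 0 = v₀ →
      (∀ t : ℝ, 0 ≤ t → 0 ≤ v t) →
      (∀ t : ℝ, 0 ≤ t → HasDerivAt v (-(c₁ * (v t) ^ α₁) - c₂ * (v t) ^ α₂) t) →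
      ∃ T : ℝ, 0 ≤ T ∧ T ≤ 1 / (c₁ * (1 - α₁)) + 1 / (c₂ * (α₂ - 1)) ∧ v T = 0) := by
  have hp₁ : (0:ℝ) < 1 - α₁ := by linarith
  have hp₂ : (0:ℝ) < α₂ - 1 := by linarith
  set T₁ : ℝ := 1 / (c₁ * (1 - α₁)) with hT₁
  set T₂ : ℝ := 1 / (c₂ * (α₂ - 1)) with hT₂
  have hT₁pos : 0 < T₁ := by positivity
  have hT₂pos : 0 < T₂ := by positivity
  constructor
  · intro v hv
    have h1 : 0 ≤ v ^ α₁ := Real.rpow_nonneg hv _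
    have h2 : 0 ≤ v ^ α₂ := Real.rpow_nonneg hv _
    rcases le_total (v ^ α₁) (v ^ α₂) with h | h
    · rw [max_eq_right h]
      have : min c₁ c₂ * v ^ α₂ ≤ c₂ * v ^ α₂ :=
        mul_le_mul_of_nonneg_right (min_le_right _ _) h2
      nlinarith
    · rw [max_eq_left h]
      have : min c₁ c₂ * v ^ α₁ ≤ c₁ * v ^ α₁ :=
        mul_le_mul_of_nonneg_right (min_le_left _ _) h1
      nlinarith
  · intro v₀ hv₀ v hv0 hnn hder
    -- Step B: from a time t₁ with v t₁ ≤ 1, v hits 0 within T₁.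
    have stepB : ∀ t₁ : ℝ, 0 ≤ t₁ → v t₁ ≤ 1 →
        ∃ T, t₁ ≤ T ∧ T ≤ t₁ + T₁ ∧ v T = 0 := by
      intro t₁ ht₁ hv1
      have hle : t₁ ≤ t₁ + T₁ := by linarith
      by_contra hcon
      push_neg at hcon
      have H : ∀ t ∈ Set.Icc t₁ (t₁ + T₁), 0 < v t := by
        intro t ht
        rcases lt_or_eq_of_le (hnn t (le_trans ht₁ ht.1)) with h | h
        · exact h
        · exact absurd h.symm (hcon t ht.1 ht.2)
      have key : ∀ t ∈ Set.Icc t₁ (t₁ + T₁), ∃ d, 0 ≤ d ∧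
          HasDerivAt (fun s => -(v s ^ (1 - α₁)) - c₁ * (1 - α₁) * s) d t := by
        intro t ht
        have h0t : 0 ≤ t := le_trans ht₁ ht.1
        have hw : 0 < v t := H t ht
        have hd1 := (hder t h0t).rpow_const (p := 1 - α₁) (Or.inl (ne_of_gt hw))
        have hd2 : HasDerivAt (fun s => -(v s ^ (1 - α₁)) - c₁ * (1 - α₁) * s)
            (-((-(c₁ * v t ^ α₁) - c₂ * v t ^ α₂) * (1 - α₁) * v t ^ (1 - α₁ - 1))
              - c₁ * (1 - α₁) * 1) t :=
          (hd1.neg).sub ((hasDerivAt_id' (x := t)).const_mul (c₁ * (1 - α₁)))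
        have hexp : (1:ℝ) - α₁ - 1 = -α₁ := by ring
        rw [hexp] at hd2
        have e1 : v t ^ α₁ * v t ^ (-α₁) = 1 := by
          rw [← Real.rpow_add hw]; simp
        have e2 : v t ^ α₂ * v t ^ (-α₁) = v t ^ (α₂ - α₁) := by
          rw [← Real.rpow_add hw]; ring_nf
        have heq : -((-(c₁ * v t ^ α₁) - c₂ * v t ^ α₂) * (1 - α₁) * v t ^ (-α₁))
            - c₁ * (1 - α₁) * 1 = (1 - α₁) * (c₂ * v t ^ (α₂ - α₁)) := by
          linear_combination ((1 - α₁) * c₁) * e1 + ((1 - α₁) * c₂) * e2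
        rw [heq] at hd2
        exact ⟨_, by positivity, hd2⟩
      have hmono := mono_aux hle key
      have hub : v t₁ ^ (1 - α₁) ≤ 1 :=
        Real.rpow_le_one (hnn t₁ ht₁) hv1 hp₁.le
      have hT₁val : c₁ * (1 - α₁) * T₁ = 1 := by
        rw [hT₁]; field_simp
      have hpos' : 0 < v (t₁ + T₁) ^ (1 - α₁) :=
        Real.rpow_pos_of_pos (H (t₁ + T₁) ⟨hle, le_refl _⟩) _
      nlinarith [hmono, hub, hT₁val, hpos']
    -- Step A: v gets ≤ 1 within time T₂.
    have stepA : ∃ t₁, 0 ≤ t₁ ∧ t₁ ≤ T₂ ∧ v t₁ ≤ 1 := by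
      by_cases hv1 : v₀ ≤ 1
      · exact ⟨0, le_refl _, hT₂pos.le, hv0 ▸ hv1⟩
      · push_neg at hv1
        by_contra hcon
        push_neg at hcon
        have H : ∀ t ∈ Set.Icc (0:ℝ) T₂, 1 < v t := by
          intro t ht
          rcases eq_or_lt_of_le ht.1 with h | h
          · rw [← h, hv0]; exact hv1
          · exact hcon t h.le ht.2
        have key : ∀ t ∈ Set.Icc (0:ℝ) T₂, ∃ d, 0 ≤ d ∧
            HasDerivAt (fun s => v s ^ (1 - α₂) - c₂ * (α₂ - 1) * s) d t := by
          intro t ht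
          have hw1 : 1 < v t := H t ht
          have hw : 0 < v t := lt_trans one_pos hw1
          have hd1 := (hder t ht.1).rpow_const (p := 1 - α₂) (Or.inl (ne_of_gt hw))
          have hd2 : HasDerivAt (fun s => v s ^ (1 - α₂) - c₂ * (α₂ - 1) * s)
              ((-(c₁ * v t ^ α₁) - c₂ * v t ^ α₂) * (1 - α₂) * v t ^ (1 - α₂ - 1)
                - c₂ * (α₂ - 1) * 1) t :=
            hd1.sub ((hasDerivAt_id' (x := t)).const_mul (c₂ * (α₂ - 1)))
          have hexp : (1:ℝ) - α₂ - 1 = -α₂ := by ring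
          rw [hexp] at hd2
          have e1 : v t ^ α₂ * v t ^ (-α₂) = 1 := by
            rw [← Real.rpow_add hw]; simp
          have e2 : v t ^ α₁ * v t ^ (-α₂) = v t ^ (α₁ - α₂) := by
            rw [← Real.rpow_add hw]; ring_nf
          have heq : (-(c₁ * v t ^ α₁) - c₂ * v t ^ α₂) * (1 - α₂) * v t ^ (-α₂)
              - c₂ * (α₂ - 1) * 1 = (α₂ - 1) * (c₁ * v t ^ (α₁ - α₂)) := by
            linear_combination ((α₂ - 1) * c₂) * e1 + ((α₂ - 1) * c₁) * e2
          rw [heq] at hd2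
          exact ⟨_, by positivity, hd2⟩
        have hmono := mono_aux hT₂pos.le key
        have hT₂val : c₂ * (α₂ - 1) * T₂ = 1 := by
          rw [hT₂]; field_simp
        have hlt1 : v T₂ ^ (1 - α₂) < 1 :=
          Real.rpow_lt_one_of_one_lt_of_neg (H T₂ ⟨hT₂pos.le, le_refl _⟩) (by linarith)
        have hpos0 : 0 < v 0 ^ (1 - α₂) := Real.rpow_pos_of_pos (by rw [hv0]; linarith) _
        nlinarith [hmono, hT₂val, hlt1, hpos0]
    obtain ⟨t₁, ht₁0, ht₁T₂, hvt₁⟩ := stepA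
    obtain ⟨T, hTl, hTu, hT0⟩ := stepB t₁ ht₁0 hvt₁
    exact ⟨T, le_trans ht₁0 hTl, by linarith, hT0⟩
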